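/- Let Π be a program of forward-propagating rules, F a set of facts, and α a rigid fact. If Π ∪ F entails α, then already Π' ∪ B entails α, where Π' is the subset of rules of Π all of whose atoms are rigid, and B is the set of rigid facts in F. In particular, every derivation of a rigid fact from Π ∪ F uses only rigid rules and rigid facts. -/

import Mathlib

/-- A fact is either rigid (no time argument) or temporal (with a natural-number time). -/
inductive TFact (A : Type) where
  | rigid (p : A)
  | temporal (p : A) (t : ℕ)

/-- The predicate of a fact. -/
def TFact.pred {A : Type} : TFact A → A
  | .rigid p => p
  | .temporal p _ => p

/-- A forward-propagating rule with a rigid head: all body atoms are rigid. -/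
structure RigidRule (A : Type) where
  head : A
  body : List A

/-- A forward-propagating rule with temporal head `headPred` at time `t`:
temporal body atoms are at times `t - k` for offsets `k`, rigid body atoms as given.
Rules mention no concrete time points: they are instantiated at every admissible `t`. -/
structure FPRule (A : Type) where
  headPred : A
  tempBody : List (A × ℕ)
  rigidBody : List A

/-- Entailment (existence of a hyper-resolution derivation) from a program of
forward-propagating rules `(Pr, Pt)` together with a set of facts `F`. -/
inductive Entails {A : Type} (Pr : Set (RigidRule A)) (Pt : Set (FPRule A))
    (F : Set (TFact A)) : TFact A → Prop where
  | fact {α : TFact A} : α ∈ F → Entails Pr Pt F α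
  | rigid {r : RigidRule A} : r ∈ Pr →
      (∀ b ∈ r.body, Entails Pr Pt F (.rigid b)) →
      Entails Pr Pt F (.rigid r.head)
  | temp {r : FPRule A} (t : ℕ) : r ∈ Pt →
      (∀ p ∈ r.tempBody, p.2 ≤ t) →
      (∀ p ∈ r.tempBody, Entails Pr Pt F (.temporal p.1 (t - p.2))) →
      (∀ b ∈ r.rigidBody, Entails Pr Pt F (.rigid b)) →
      Entails Pr Pt F (.temporal r.headPred t)

/-- A derivation tree: a node labelled with a conclusion fact, with subderivations. -/
inductive Deriv (A : Type) where
  | node (concl : TFact A) (subs : List (Deriv A))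

/-- The conclusion (root label head) of a derivation. -/
def Deriv.concl {A : Type} : Deriv A → TFact A
  | .node c _ => c

/-- Validity of a derivation from program `(Pr, Pt)` and facts `F`:
each node is labelled by a ground instance of a rule (or a fact, as a leaf),
and the body atoms are exactly the conclusions of the children. -/
inductive ValidDeriv {A : Type} (Pr : Set (RigidRule A)) (Pt : Set (FPRule A))
    (F : Set (TFact A)) : Deriv A → Prop where
  | fact {c : TFact A} : c ∈ F → ValidDeriv Pr Pt F (.node c [])
  | rigid {r : RigidRule A} {subs : List (Deriv A)} : r ∈ Pr →
      subs.map Deriv.concl = r.body.map TFact.rigid →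
      (∀ d ∈ subs, ValidDeriv Pr Pt F d) →
      ValidDeriv Pr Pt F (.node (.rigid r.head) subs)
  | temp {r : FPRule A} {subs : List (Deriv A)} (t : ℕ) : r ∈ Pt →
      (∀ p ∈ r.tempBody, p.2 ≤ t) →
      subs.map Deriv.concl =
        r.tempBody.map (fun p => TFact.temporal p.1 (t - p.2)) ++
          r.rigidBody.map TFact.rigid →
      (∀ d ∈ subs, ValidDeriv Pr Pt F d) →
      ValidDeriv Pr Pt F (.node (.temporal r.headPred t) subs)

/-- A time point `t` occurs in a derivation. -/
inductive TimeIn {A : Type} : Deriv A → ℕ → Prop where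
  | root (p : A) (t : ℕ) (subs : List (Deriv A)) :
      TimeIn (.node (.temporal p t) subs) t
  | sub {d : Deriv A} {t : ℕ} (c : TFact A) (subs : List (Deriv A)) :
      d ∈ subs → TimeIn d t → TimeIn (.node c subs) t

/-- A rigid fact entailed by `Π ∪ F` is already entailed by the rigid (Datalog)
subprogram together with the rigid facts of `F`; moreover every derivation of a
rigid fact only uses rigid rules and rigid facts. -/
theorem rigid_entailment_uses_rigid_part {A : Type}
    (Pr : Set (RigidRule A)) (Pt : Set (FPRule A)) (F : Set (TFact A)) (a : A) :
    (Entails Pr Pt F (.rigid a) →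
      Entails Pr (∅ : Set (FPRule A)) {f ∈ F | ∃ p : A, f = TFact.rigid p} (.rigid a))
    ∧ (∀ δ : Deriv A, ValidDeriv Pr Pt F δ → (∃ p : A, δ.concl = TFact.rigid p) →
        ValidDeriv Pr (∅ : Set (FPRule A)) {f ∈ F | ∃ p : A, f = TFact.rigid p} δ) := by
  constructor
  · intro h
    have aux : ∀ α, Entails Pr Pt F α → (∃ p : A, α = TFact.rigid p) →
        Entails Pr (∅ : Set (FPRule A)) {f ∈ F | ∃ p : A, f = TFact.rigid p} α := by
      intro α h
      induction h with
      | fact hF => intro hp; exact Entails.fact ⟨hF, hp⟩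
      | rigid hr _ ih =>
          intro _
          exact Entails.rigid hr (fun b hb => ih b hb ⟨b, rfl⟩)
      | temp t _ _ _ _ _ _ => rintro ⟨p, hp⟩; exact absurd hp (by simp)
    exact aux _ h ⟨a, rfl⟩
  · intro δ hδ
    induction hδ with
    | fact hF => intro hp; exact ValidDeriv.fact ⟨hF, hp⟩
    | @rigid r subs hr hmap _ ih =>
        intro _
        refine ValidDeriv.rigid hr hmap (fun d hd => ih d hd ?_)
        have : Deriv.concl d ∈ subs.map Deriv.concl := List.mem_map_of_mem hd
        rw [hmap] at this
        rcases List.mem_map.1 this with ⟨b, _, hb⟩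
        exact ⟨b, hb.symm⟩
    | temp t _ _ _ _ _ => rintro ⟨p, hp⟩; exact absurd hp (by simp [Deriv.concl])
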